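/- Let K be a finite connected simple graph with V vertices and E edges. Then the number of cellular 2-cycles in K² equals 2^{(E-V+1)²}. -/

import Mathlib

/-- A 1-cycle in a simple graph `G` is a set `C` of edges of `G` such that every
vertex is incident to an even number of edges of `C`. -/
def IsOneCycle {V : Type*} [DecidableEq V] (G : SimpleGraph V) (C : Finset (Sym2 V)) : Prop :=
  (∀ e ∈ C, e ∈ G.edgeSet) ∧ ∀ v : V, Even (C.filter (fun e => v ∈ e)).card

/-- A cellular 2-cycle in `K²` is a set `C` of ordered pairs of edges of `K` such that
for every edge `σ`, both sections `{τ : (σ,τ) ∈ C}` and `{τ : (τ,σ) ∈ C}` are 1-cycles. -/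
def IsCellular2Cycle {V : Type*} [DecidableEq V] (G : SimpleGraph V)
    (C : Finset (Sym2 V × Sym2 V)) : Prop :=
  (∀ p ∈ C, p.1 ∈ G.edgeSet ∧ p.2 ∈ G.edgeSet) ∧
  ∀ σ : Sym2 V,
    IsOneCycle G ((C.filter (fun p => p.1 = σ)).image Prod.snd) ∧
    IsOneCycle G ((C.filter (fun p => p.2 = σ)).image Prod.fst)

set_option linter.unusedSectionVars false

open Module Finset



section Bi
variable {F : Type*} [Field F] {ι : Type*} [Fintype ι] [DecidableEq ι]
  (Z : Submodule F (ι → F))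

theorem bicard : Nat.card {m : ι → ι → F // (∀ σ, m σ ∈ Z) ∧ ∀ τ, (fun σ => m σ τ) ∈ Z}
    = Nat.card F ^ (finrank F Z * finrank F Z) := by
  classical
  set d := finrank F Z with hd
  have : FiniteDimensional F Z := inferInstance
  let b : Basis (Fin d) F Z := Module.finBasis F Z
  let b' : Fin d → ι → F := fun i => (b i : ι → F)
  have hb'li : LinearIndependent F b' := by
    have := b.linearIndependent.map' Z.subtype (Submodule.ker_subtype Z)
    exact this
  have hb'mem : ∀ i, b' i ∈ Z := fun i => (b i).2
  -- the map
  let Φ : (Fin d → Fin d → F) → (ι → ι → F) :=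
    fun A σ τ => ∑ i, ∑ j, A i j * b' i σ * b' j τ
  have hrow : ∀ A σ, Φ A σ ∈ Z := by
    intro A σ
    have : Φ A σ = ∑ j, (∑ i, A i j * b' i σ) • b' j := by
      funext τ
      simp only [Φ, Finset.sum_apply, Pi.smul_apply, smul_eq_mul, Finset.sum_mul]
      rw [Finset.sum_comm]
    rw [this]
    exact Submodule.sum_mem _ fun j _ => Submodule.smul_mem _ _ (hb'mem j)
  have hcol : ∀ A τ, (fun σ => Φ A σ τ) ∈ Z := by
    intro A τ
    have : (fun σ => Φ A σ τ) = ∑ i, (∑ j, A i j * b' j τ) • b' i := by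
      funext σ
      simp only [Φ, Finset.sum_apply, Pi.smul_apply, smul_eq_mul, Finset.sum_mul]
      refine Finset.sum_congr rfl fun i _ => Finset.sum_congr rfl fun j _ => by ring
    rw [this]
    exact Submodule.sum_mem _ fun i _ => Submodule.smul_mem _ _ (hb'mem i)
  have hinj : Function.Injective Φ := by
    intro A B hAB
    have key : ∀ (Cm : Fin d → Fin d → F), Φ Cm = 0 → Cm = 0 := by
      intro Cm hC
      have h1 : ∀ τ i, (∑ j, Cm i j * b' j τ) = 0 := by
        intro τ
        have : ∑ i, (∑ j, Cm i j * b' j τ) • b' i = 0 := by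
          funext σ
          have := congrFun (congrFun hC σ) τ
          simp only [Φ, Pi.zero_apply] at this ⊢
          simp only [Finset.sum_apply, Pi.smul_apply, smul_eq_mul, Pi.zero_apply]
          rw [← this]
          refine Finset.sum_congr rfl fun i _ => ?_
          rw [Finset.sum_mul]
          refine Finset.sum_congr rfl fun j _ => by ring
        exact Fintype.linearIndependent_iff.1 hb'li _ this
      funext i
      have : ∑ j, Cm i j • b' j = 0 := by
        funext τ
        simpa [Finset.sum_apply] using h1 τ i
      funext j
      exact Fintype.linearIndependent_iff.1 hb'li _ this j
    have : A - B = 0 := by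
      apply key
      funext σ τ
      simp only [Φ, Pi.zero_apply, Pi.sub_apply]
      rw [← sub_eq_zero] at hAB
      have := congrFun (congrFun hAB σ) τ
      simp only [Φ, Pi.sub_apply, Pi.zero_apply] at this ⊢
      rw [← this, ← Finset.sum_sub_distrib]
      refine Finset.sum_congr rfl fun i _ => ?_
      rw [← Finset.sum_sub_distrib]
      refine Finset.sum_congr rfl fun j _ => by ring
    exact sub_eq_zero.1 this
  have hsurj : ∀ m : ι → ι → F, (∀ σ, m σ ∈ Z) → (∀ τ, (fun σ => m σ τ) ∈ Z) →
      ∃ A, Φ A = m := by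
    intro m hr hc
    -- coordinates of rows
    let c : ι → Fin d → F := fun σ => b.repr ⟨m σ, hr σ⟩
    have hrowrepr : ∀ σ, m σ = ∑ j, c σ j • b' j := by
      intro σ
      have := (b.sum_repr ⟨m σ, hr σ⟩).symm
      have h2 := congrArg (Z.subtype) this
      have h5 := congrArg Subtype.val this
      simp only [Submodule.coe_sum, Submodule.coe_smul] at h5
      exact h5
    -- each "column" of c is in Z
    have hcmem : ∀ j, (fun σ => c σ j) ∈ Z := by
      intro j
      -- extend the coordinate functional
      obtain ⟨g, hg⟩ := LinearMap.exists_extend ((Basis.coord b j))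
      have hcg : ∀ σ, c σ j = g (m σ) := by
        intro σ
        have := congrFun (congrArg (fun f => f.toFun) hg) ⟨m σ, hr σ⟩
        simpa [c] using this.symm
      have : (fun σ => c σ j) = ∑ τ, g (fun k => if τ = k then 1 else 0) • (fun σ => m σ τ) := by
        funext σ
        simp only [Finset.sum_apply, Pi.smul_apply, smul_eq_mul]
        rw [hcg σ, LinearMap.pi_apply_eq_sum_univ g (m σ)]
        refine Finset.sum_congr rfl fun τ _ => by rw [smul_eq_mul, mul_comm]
      rw [this]
      exact Submodule.sum_mem _ fun τ _ => Submodule.smul_mem _ _ (hc τ)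
    let A : Fin d → Fin d → F := fun i j => b.repr ⟨fun σ => c σ j, hcmem j⟩ i
    have hcolrepr : ∀ j σ, c σ j = ∑ i, A i j * b' i σ := by
      intro j σ
      have := (b.sum_repr ⟨fun σ => c σ j, hcmem j⟩).symm
      have h2 := congrArg (Z.subtype) this
      have h3 := congrFun (congrArg Subtype.val this) σ
      have h5 := congrArg Subtype.val this
      simp only [Submodule.coe_sum, Submodule.coe_smul] at h5
      have h6 := congrFun h5 σ
      simp only [Finset.sum_apply, Pi.smul_apply, smul_eq_mul] at h6
      exact h6
    refine ⟨A, ?_⟩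
    funext σ τ
    have := congrFun (hrowrepr σ) τ
    simp only [Finset.sum_apply, Pi.smul_apply, smul_eq_mul] at this
    show (∑ i, ∑ j, A i j * b' i σ * b' j τ) = m σ τ
    rw [Finset.sum_comm]
    rw [this]
    refine Finset.sum_congr rfl fun j _ => ?_
    rw [hcolrepr j σ, Finset.sum_mul]
  -- conclude
  have : Nonempty ((Fin d → Fin d → F) ≃ {m : ι → ι → F // (∀ σ, m σ ∈ Z) ∧ ∀ τ, (fun σ => m σ τ) ∈ Z}) := by
    refine ⟨Equiv.ofBijective (fun A => ⟨Φ A, hrow A, hcol A⟩) ⟨?_, ?_⟩⟩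
    · intro A B h
      exact hinj (congrArg Subtype.val h)
    · rintro ⟨m, hr, hc⟩
      obtain ⟨A, hA⟩ := hsurj m hr hc
      exact ⟨A, Subtype.ext hA⟩
  obtain ⟨e⟩ := this
  rw [← Nat.card_congr e]
  simp only [Nat.card_fun, Nat.card_eq_fintype_card (α := Fin d), Fintype.card_fin, ← pow_mul]
end Bi


section Graph
variable {V : Type*} [Fintype V] [DecidableEq V] (G : SimpleGraph V) [DecidableRel G.Adj]

abbrev F2 := ZMod 2

/-- incidence map -/
noncomputable def inc : (G.edgeSet → F2) →ₗ[F2] (V → F2) where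
  toFun f v := ∑ e : G.edgeSet, if v ∈ (e : Sym2 V) then f e else 0
  map_add' f g := by
    funext v
    simp only [Pi.add_apply, ← Finset.sum_add_distrib]
    exact Finset.sum_congr rfl fun e _ => by split <;> simp
  map_smul' c f := by
    funext v
    simp only [Pi.smul_apply, smul_eq_mul, RingHom.id_apply, Finset.mul_sum]
    exact Finset.sum_congr rfl fun e _ => by split <;> simp

lemma inc_single (e : G.edgeSet) :
    inc G (Pi.single e 1) = fun v => if v ∈ (e : Sym2 V) then 1 else 0 := by
  funext v
  simp only [inc, LinearMap.coe_mk, AddHom.coe_mk]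
  rw [Finset.sum_eq_single e]
  · simp [Pi.single_eq_same]
  · intro b _ hb
    simp [Pi.single_eq_of_ne hb]
  · simp

lemma two_mem (e : G.edgeSet) : (Finset.univ.filter (fun v => v ∈ (e : Sym2 V))).card = 2 := by
  obtain ⟨e, he⟩ := e
  induction e with
  | _ a b =>
    have hab : a ≠ b := (G.mem_edgeSet.1 he).ne
    have : Finset.univ.filter (fun v => v ∈ s(a, b)) = {a, b} := by
      ext v; simp [Sym2.mem_iff]
    simp only [this]
    rw [Finset.card_insert_of_notMem (by simp [hab]), Finset.card_singleton]

noncomputable def sumF : (V → F2) →ₗ[F2] F2 where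
  toFun g := ∑ v, g v
  map_add' f g := by simp [Finset.sum_add_distrib]
  map_smul' c f := by simp [Finset.mul_sum]

lemma range_inc_le : LinearMap.range (inc G) ≤ LinearMap.ker (sumF (V := V)) := by
  rintro _ ⟨f, rfl⟩
  simp only [LinearMap.mem_ker, sumF, LinearMap.coe_mk, AddHom.coe_mk, inc]
  rw [Finset.sum_comm]
  rw [Finset.sum_eq_zero]
  intro e _
  rw [← Finset.sum_filter, Finset.sum_const, two_mem]
  rw [two_nsmul, CharTwo.add_self_eq_zero]
  
end Graph

section Conn
variable {V : Type*} [Fintype V] [DecidableEq V] (G : SimpleGraph V) [DecidableRel G.Adj]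

lemma single_pair_mem_range {u w : V} (h : G.Adj u w) :
    Pi.single u 1 + Pi.single w 1 ∈ LinearMap.range (inc G) := by
  refine ⟨Pi.single (⟨s(u, w), G.mem_edgeSet.2 h⟩ : G.edgeSet) 1, ?_⟩
  rw [inc_single]
  funext x
  have huw : u ≠ w := h.ne
  simp only [Pi.add_apply]
  by_cases hxu : x = u
  · subst hxu
    simp [Sym2.mem_iff, Pi.single_eq_same, Pi.single_eq_of_ne huw]
  · by_cases hxw : x = w
    · subst hxw
      simp [Sym2.mem_iff, Pi.single_eq_same, Pi.single_eq_of_ne hxu]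
    · simp [Sym2.mem_iff, hxu, hxw, Pi.single_eq_of_ne]

lemma reachable_mem_range {u w : V} (h : G.Reachable u w) :
    Pi.single u (1 : F2) + Pi.single w 1 ∈ LinearMap.range (inc G) := by
  obtain ⟨p⟩ := h
  induction p with
  | nil =>
    have addself : ∀ y : V → F2, y + y = 0 := fun y => funext fun x => CharTwo.add_self_eq_zero _
    rw [addself]
    exact Submodule.zero_mem _
  | @cons a c w hac p ih =>
    have h1 := single_pair_mem_range G hac
    have h2 := Submodule.add_mem _ h1 ih
    convert h2 using 1
    funext x
    simp only [Pi.add_apply]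
    have : ∀ p q r : F2, p + r = p + q + (q + r) := by decide
    exact this _ _ _

lemma ker_le_range (hconn : G.Connected) :
    LinearMap.ker (sumF (V := V)) ≤ LinearMap.range (inc G) := by
  intro g hg
  obtain ⟨v0⟩ := hconn.nonempty
  have hsum : (∑ u, g u) = 0 := hg
  have hsingle : ∀ u : V, (fun j => if u = j then (1 : F2) else 0) = Pi.single u 1 := by
    intro u; funext j; rw [Pi.single_apply]; simp [eq_comm]
  have hg' : g = ∑ u, g u • Pi.single u 1 := by
    conv_lhs => rw [pi_eq_sum_univ g]
    refine Finset.sum_congr rfl fun u _ => by rw [hsingle]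
  have hdecomp : ∑ u, g u • (Pi.single u 1 + Pi.single v0 1) = g := by
    simp only [smul_add, Finset.sum_add_distrib, ← Finset.sum_smul, hsum, zero_smul, add_zero]
    exact hg'.symm
  rw [← hdecomp]
  exact Submodule.sum_mem _ fun u _ =>
    Submodule.smul_mem _ _ (reachable_mem_range G (hconn.preconnected u v0))

lemma range_inc_eq (hconn : G.Connected) :
    LinearMap.range (inc G) = LinearMap.ker (sumF (V := V)) :=
  le_antisymm (range_inc_le G) (ker_le_range G hconn)

lemma sumF_surj (hconn : G.Connected) : Function.Surjective (sumF (V := V)) := by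
  obtain ⟨v0⟩ := hconn.nonempty
  intro c
  refine ⟨Pi.single v0 c, ?_⟩
  simp [sumF]

lemma finrank_ker_inc (hconn : G.Connected) :
    finrank F2 (LinearMap.ker (inc G)) = Fintype.card G.edgeSet + 1 - Fintype.card V := by
  have h1 := LinearMap.finrank_range_add_finrank_ker (inc G)
  have h2 := LinearMap.finrank_range_add_finrank_ker (sumF (V := V))
  have h3 : LinearMap.range (sumF (V := V)) = ⊤ := LinearMap.range_eq_top.2 (sumF_surj G hconn)
  rw [h3] at h2
  have h4 : finrank F2 (⊤ : Submodule F2 F2) = 1 := by simp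
  rw [h4] at h2
  rw [range_inc_eq G hconn] at h1
  have h5 : finrank F2 (G.edgeSet → F2) = Fintype.card G.edgeSet := by
    simp [Module.finrank_pi]
  have h6 : finrank F2 (V → F2) = Fintype.card V := by simp [Module.finrank_pi]
  rw [h5] at h1
  rw [h6] at h2
  have hV : 1 ≤ Fintype.card V := Fintype.card_pos_iff.2 hconn.nonempty
  omega
end Conn
section Bridge
variable {V : Type*} [Fintype V] [DecidableEq V] (G : SimpleGraph V) [DecidableRel G.Adj]

lemma even_iff_cast_zero (n : ℕ) : Even n ↔ ((n : F2) = 0) := by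
  rw [ZMod.natCast_eq_zero_iff, even_iff_two_dvd]

lemma sec1_card (C : Finset (Sym2 V × Sym2 V)) (hC : ∀ p ∈ C, p.1 ∈ G.edgeSet ∧ p.2 ∈ G.edgeSet)
    (σ : Sym2 V) (v : V) :
    (((C.filter (fun p => p.1 = σ)).image Prod.snd).filter (fun e => v ∈ e)).card
      = ((univ : Finset G.edgeSet).filter
          (fun τ : G.edgeSet => v ∈ (τ : Sym2 V) ∧ (σ, (τ : Sym2 V)) ∈ C)).card := by
  symm
  refine Finset.card_bij (fun τ _ => (τ : Sym2 V)) ?_ ?_ ?_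
  · rintro τ hτ
    simp only [Finset.mem_filter, Finset.mem_univ, true_and] at hτ
    simp only [Finset.mem_filter, Finset.mem_image]
    exact ⟨⟨(σ, (τ : Sym2 V)), by simp [Finset.mem_filter, hτ.2], rfl⟩, hτ.1⟩
  · rintro τ₁ _ τ₂ _ h
    exact Subtype.ext h
  · rintro e he
    simp only [Finset.mem_filter, Finset.mem_image] at he
    obtain ⟨⟨p, hp, hpe⟩, hv⟩ := he
    refine ⟨⟨e, ?_⟩, ?_, rfl⟩
    · rw [← hpe]; exact (hC p hp.1).2
    · simp only [Finset.mem_filter, Finset.mem_univ, true_and]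
      refine ⟨hv, ?_⟩
      have : p = (σ, e) := by
        obtain ⟨p1, p2⟩ := p
        simp only [Prod.mk.injEq]
        exact ⟨hp.2, hpe⟩
      rw [← this]; exact hp.1

lemma sec2_card (C : Finset (Sym2 V × Sym2 V)) (hC : ∀ p ∈ C, p.1 ∈ G.edgeSet ∧ p.2 ∈ G.edgeSet)
    (σ : Sym2 V) (v : V) :
    (((C.filter (fun p => p.2 = σ)).image Prod.fst).filter (fun e => v ∈ e)).card
      = ((univ : Finset G.edgeSet).filter
          (fun τ : G.edgeSet => v ∈ (τ : Sym2 V) ∧ ((τ : Sym2 V), σ) ∈ C)).card := by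
  symm
  refine Finset.card_bij (fun τ _ => (τ : Sym2 V)) ?_ ?_ ?_
  · rintro τ hτ
    simp only [Finset.mem_filter, Finset.mem_univ, true_and] at hτ
    simp only [Finset.mem_filter, Finset.mem_image]
    exact ⟨⟨((τ : Sym2 V), σ), by simp [Finset.mem_filter, hτ.2], rfl⟩, hτ.1⟩
  · rintro τ₁ _ τ₂ _ h
    exact Subtype.ext h
  · rintro e he
    simp only [Finset.mem_filter, Finset.mem_image] at he
    obtain ⟨⟨p, hp, hpe⟩, hv⟩ := he
    refine ⟨⟨e, ?_⟩, ?_, rfl⟩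
    · rw [← hpe]; exact (hC p hp.1).1
    · simp only [Finset.mem_filter, Finset.mem_univ, true_and]
      refine ⟨hv, ?_⟩
      have : p = (e, σ) := by
        obtain ⟨p1, p2⟩ := p
        simp only [Prod.mk.injEq]
        exact ⟨hpe, hp.2⟩
      rw [← this]; exact hp.1

lemma sum_ite_card (v : V) (P : G.edgeSet → Prop)
    [DecidablePred P] :
    (∑ τ : G.edgeSet, if v ∈ (τ : Sym2 V) then (if P τ then (1 : F2) else 0) else 0)
      = (((univ : Finset G.edgeSet).filter (fun τ : G.edgeSet => v ∈ (τ : Sym2 V) ∧ P τ)).card : F2) := by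
  rw [← Finset.sum_boole]
  refine Finset.sum_congr rfl fun τ _ => ?_
  by_cases h1 : v ∈ (τ : Sym2 V) <;> by_cases h2 : P τ <;> simp [h1, h2]

end Bridge

section Main
variable {V : Type*} [Fintype V] [DecidableEq V] (G : SimpleGraph V) [DecidableRel G.Adj]

noncomputable def toMatrix (C : Finset (Sym2 V × Sym2 V)) : G.edgeSet → G.edgeSet → F2 :=
  fun σ τ => if ((σ : Sym2 V), (τ : Sym2 V)) ∈ C then 1 else 0

noncomputable def toFinset2 (m : G.edgeSet → G.edgeSet → F2) : Finset (Sym2 V × Sym2 V) :=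
  ((univ : Finset (G.edgeSet × G.edgeSet)).filter (fun q => m q.1 q.2 = 1)).image
    (fun q => ((q.1 : Sym2 V), (q.2 : Sym2 V)))

lemma mem_toFinset2 (m : G.edgeSet → G.edgeSet → F2) (p : Sym2 V × Sym2 V) :
    p ∈ toFinset2 G m ↔ ∃ h1 : p.1 ∈ G.edgeSet, ∃ h2 : p.2 ∈ G.edgeSet,
      m ⟨p.1, h1⟩ ⟨p.2, h2⟩ = 1 := by
  simp only [toFinset2, Finset.mem_image, Finset.mem_filter, Finset.mem_univ, true_and]
  constructor
  · rintro ⟨q, hq, rfl⟩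
    exact ⟨q.1.2, q.2.2, by simpa [Subtype.coe_eta] using hq⟩
  · rintro ⟨h1, h2, hm⟩
    exact ⟨(⟨p.1, h1⟩, ⟨p.2, h2⟩), hm, rfl⟩

lemma toMatrix_row_mem (C : Finset (Sym2 V × Sym2 V)) (hcell : IsCellular2Cycle G C)
    (σ : G.edgeSet) : toMatrix G C σ ∈ LinearMap.ker (inc G) := by
  rw [LinearMap.mem_ker]
  funext v
  show (∑ τ : G.edgeSet, if v ∈ (τ : Sym2 V) then toMatrix G C σ τ else 0) = 0
  simp only [toMatrix]
  rw [sum_ite_card G v (fun τ => ((σ : Sym2 V), (τ : Sym2 V)) ∈ C)]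
  rw [← sec1_card G C hcell.1 (σ : Sym2 V) v]
  exact (even_iff_cast_zero _).1 ((hcell.2 (σ : Sym2 V)).1.2 v)

lemma toMatrix_col_mem (C : Finset (Sym2 V × Sym2 V)) (hcell : IsCellular2Cycle G C)
    (τ : G.edgeSet) : (fun σ => toMatrix G C σ τ) ∈ LinearMap.ker (inc G) := by
  rw [LinearMap.mem_ker]
  funext v
  show (∑ σ : G.edgeSet, if v ∈ (σ : Sym2 V) then toMatrix G C σ τ else 0) = 0
  simp only [toMatrix]
  rw [sum_ite_card G v (fun σ => ((σ : Sym2 V), (τ : Sym2 V)) ∈ C)]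
  rw [← sec2_card G C hcell.1 (τ : Sym2 V) v]
  exact (even_iff_cast_zero _).1 ((hcell.2 (τ : Sym2 V)).2.2 v)

lemma right_inv2 (m : G.edgeSet → G.edgeSet → F2) : toMatrix G (toFinset2 G m) = m := by
  funext σ τ
  simp only [toMatrix]
  by_cases h : m σ τ = 1
  · rw [if_pos, h]
    rw [mem_toFinset2]
    exact ⟨σ.2, τ.2, by simpa [Subtype.coe_eta] using h⟩
  · rw [if_neg]
    · have h0 : ∀ x : F2, x ≠ 1 → x = 0 := by decide
      exact (h0 _ h).symm
    · rw [mem_toFinset2]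
      rintro ⟨h1, h2, hm⟩
      exact h (by simpa [Subtype.coe_eta] using hm)

lemma left_inv2 (C : Finset (Sym2 V × Sym2 V)) (hcell : IsCellular2Cycle G C) :
    toFinset2 G (toMatrix G C) = C := by
  ext p
  rw [mem_toFinset2]
  simp only [toMatrix]
  constructor
  · rintro ⟨h1, h2, hm⟩
    by_cases hpc : ((p.1 : Sym2 V), (p.2 : Sym2 V)) ∈ C
    · exact hpc
    · rw [if_neg hpc] at hm
      exact absurd hm (by decide)
  · intro hp
    refine ⟨(hcell.1 p hp).1, (hcell.1 p hp).2, ?_⟩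
    rw [if_pos hp]

lemma toFinset2_cell (m : G.edgeSet → G.edgeSet → F2)
    (hr : ∀ σ, m σ ∈ LinearMap.ker (inc G))
    (hc : ∀ τ, (fun σ => m σ τ) ∈ LinearMap.ker (inc G)) :
    IsCellular2Cycle G (toFinset2 G m) := by
  have hmem : ∀ p ∈ toFinset2 G m, p.1 ∈ G.edgeSet ∧ p.2 ∈ G.edgeSet := by
    intro p hp
    rw [mem_toFinset2] at hp
    obtain ⟨h1, h2, _⟩ := hp
    exact ⟨h1, h2⟩
  refine ⟨hmem, fun σ => ?_⟩
  by_cases hσ : σ ∈ G.edgeSet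
  · constructor
    · constructor
      · intro e he
        simp only [Finset.mem_image, Finset.mem_filter] at he
        obtain ⟨p, ⟨hp, _⟩, rfl⟩ := he
        exact (hmem p hp).2
      · intro v
        rw [even_iff_cast_zero, sec1_card G _ hmem σ v,
          ← sum_ite_card G v (fun τ : G.edgeSet => (σ, (τ : Sym2 V)) ∈ toFinset2 G m)]
        have hrow := hr ⟨σ, hσ⟩
        rw [LinearMap.mem_ker] at hrow
        have hv := congrFun hrow v
        simp only [inc, LinearMap.coe_mk, AddHom.coe_mk, Pi.zero_apply] at hv
        conv_rhs => rw [← hv]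
        refine Finset.sum_congr rfl fun τ _ => ?_
        congr 1
        have : ((σ : Sym2 V), (τ : Sym2 V)) ∈ toFinset2 G m ↔ m ⟨σ, hσ⟩ τ = 1 := by
          rw [mem_toFinset2]
          constructor
          · rintro ⟨h1, h2, hm⟩
            simpa [Subtype.coe_eta] using hm
          · intro h
            exact ⟨hσ, τ.2, by simpa [Subtype.coe_eta] using h⟩
        by_cases h1 : m ⟨σ, hσ⟩ τ = 1
        · rw [if_pos (this.2 h1), h1]
        · rw [if_neg (fun hh => h1 (this.1 hh))]
          have h0 : ∀ x : F2, x ≠ 1 → x = 0 := by decide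
          exact (h0 _ h1).symm
    · constructor
      · intro e he
        simp only [Finset.mem_image, Finset.mem_filter] at he
        obtain ⟨p, ⟨hp, _⟩, rfl⟩ := he
        exact (hmem p hp).1
      · intro v
        rw [even_iff_cast_zero, sec2_card G _ hmem σ v,
          ← sum_ite_card G v (fun τ : G.edgeSet => ((τ : Sym2 V), σ) ∈ toFinset2 G m)]
        have hcol := hc ⟨σ, hσ⟩
        rw [LinearMap.mem_ker] at hcol
        have hv := congrFun hcol v
        simp only [inc, LinearMap.coe_mk, AddHom.coe_mk, Pi.zero_apply] at hv
        conv_rhs => rw [← hv]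
        refine Finset.sum_congr rfl fun τ _ => ?_
        congr 1
        have : (((τ : Sym2 V)), σ) ∈ toFinset2 G m ↔ m τ ⟨σ, hσ⟩ = 1 := by
          rw [mem_toFinset2]
          constructor
          · rintro ⟨h1, h2, hm⟩
            simpa [Subtype.coe_eta] using hm
          · intro h
            exact ⟨τ.2, hσ, by simpa [Subtype.coe_eta] using h⟩
        by_cases h1 : m τ ⟨σ, hσ⟩ = 1
        · rw [if_pos (this.2 h1), h1]
        · rw [if_neg (fun hh => h1 (this.1 hh))]
          have h0 : ∀ x : F2, x ≠ 1 → x = 0 := by decide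
          exact (h0 _ h1).symm
  · have hemp1 : (toFinset2 G m).filter (fun p => p.1 = σ) = ∅ := by
      rw [Finset.filter_eq_empty_iff]
      intro p hp h
      exact hσ (h ▸ (hmem p hp).1)
    have hemp2 : (toFinset2 G m).filter (fun p => p.2 = σ) = ∅ := by
      rw [Finset.filter_eq_empty_iff]
      intro p hp h
      exact hσ (h ▸ (hmem p hp).2)
    rw [hemp1, hemp2]
    constructor <;> exact ⟨by simp, by simp⟩

end Main

/-- For a finite connected simple graph `K` with `V` vertices and `E` edges, the number
of cellular 2-cycles in `K²` equals `2 ^ ((E - V + 1)²)`. -/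
theorem card_cellular2Cycles {V : Type*} [Fintype V] [DecidableEq V]
    (G : SimpleGraph V) [DecidableRel G.Adj] (hconn : G.Connected) :
    Nat.card {C : Finset (Sym2 V × Sym2 V) // IsCellular2Cycle G C}
      = 2 ^ ((G.edgeFinset.card + 1 - Fintype.card V) ^ 2) := by
  classical
  set Z := LinearMap.ker (inc G) with hZ
  have key := bicard (F := F2) (ι := G.edgeSet) Z
  have e : {C : Finset (Sym2 V × Sym2 V) // IsCellular2Cycle G C} ≃
      {m : G.edgeSet → G.edgeSet → F2 // (∀ σ, m σ ∈ Z) ∧ ∀ τ, (fun σ => m σ τ) ∈ Z} :=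
    { toFun := fun C => ⟨toMatrix G C.1,
        fun σ => toMatrix_row_mem G C.1 C.2 σ, fun τ => toMatrix_col_mem G C.1 C.2 τ⟩
      invFun := fun m => ⟨toFinset2 G m.1, toFinset2_cell G m.1 m.2.1 m.2.2⟩
      left_inv := fun C => Subtype.ext (left_inv2 G C.1 C.2)
      right_inv := fun m => Subtype.ext (right_inv2 G m.1) }
  rw [Nat.card_congr e, key]
  have hF : Nat.card F2 = 2 := by
    rw [Nat.card_eq_fintype_card]
    exact ZMod.card 2
  rw [hF]
  congr 1
  have hd : finrank F2 Z = G.edgeFinset.card + 1 - Fintype.card V := by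
    rw [hZ, finrank_ker_inc G hconn, SimpleGraph.edgeFinset_card]
  rw [hd, sq]
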